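/- Let M ∈ M_n(Z) be invertible, D, S ⊂ Z^n finite sets of the same cardinality q, and B ∈ M_n(Z) an invertible integer matrix such that B^{-1}D ⊂ Z^n. If the matrix H = (1/√q)[e^{2πi⟨M^{-1}d, s⟩}]_{d∈D, s∈S} is unitary, then so is H̃ = (1/√q)[e^{2πi⟨M̃^{-1}d̃, s̃⟩}]_{d̃∈D̃, s̃∈S̃}, where M̃ = B^{-1}MB, D̃ = B^{-1}D, and S̃ = B^* S. -/
import Mathlib


open Matrix Complex

/-- If `(M, D, S)` is a Hadamard triple (i.e. the matrix
`H = (1/√q)[e^{2πi⟨M⁻¹d, s⟩}]` is unitary) and `B` is an invertible integer matrix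
with `B⁻¹D ⊂ ℤ^n`, then the conjugate triple `(B⁻¹MB, B⁻¹D, BᵀS)` is also a
Hadamard triple. -/
theorem stmt_11 (n q : ℕ) (M B : Matrix (Fin n) (Fin n) ℤ)
    (hM : (M.map (Int.cast : ℤ → ℚ)).det ≠ 0)
    (hB : (B.map (Int.cast : ℤ → ℚ)).det ≠ 0)
    (D S : Finset (Fin n → ℤ)) (hDq : D.card = q) (hSq : S.card = q)
    (hBD : ∀ d ∈ D, ∃ w : Fin n → ℤ,
      (B.map (Int.cast : ℤ → ℚ))⁻¹ *ᵥ (fun i => (d i : ℚ)) = fun i => (w i : ℚ))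
    (H : Matrix {d // d ∈ D} {s // s ∈ S} ℂ)
    (hH : ∀ (d : {d // d ∈ D}) (s : {s // s ∈ S}), H d s =
      (1 / Real.sqrt q : ℝ) * Complex.exp (2 * Real.pi * Complex.I *
        (∑ i : Fin n, ((M.map (Int.cast : ℤ → ℂ))⁻¹ *ᵥ (fun t => ((d : Fin n → ℤ) t : ℂ))) i
          * ((s : Fin n → ℤ) i : ℂ))))
    (hUnitary : H.conjTranspose * H = 1)
    (Ht : Matrix {d // d ∈ D} {s // s ∈ S} ℂ)
    (hHt : ∀ (d : {d // d ∈ D}) (s : {s // s ∈ S}), Ht d s =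
      (1 / Real.sqrt q : ℝ) * Complex.exp (2 * Real.pi * Complex.I *
        (∑ i : Fin n,
          (((B.map (Int.cast : ℤ → ℂ))⁻¹ * (M.map (Int.cast : ℤ → ℂ))
              * (B.map (Int.cast : ℤ → ℂ)))⁻¹ *ᵥ
            ((B.map (Int.cast : ℤ → ℂ))⁻¹ *ᵥ (fun t => ((d : Fin n → ℤ) t : ℂ)))) i
          * (((B.map (Int.cast : ℤ → ℂ)).transpose *ᵥ (fun t => ((s : Fin n → ℤ) t : ℂ))) i)))) :
    Ht.conjTranspose * Ht = 1 := by

  have key : Ht = H := by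
    ext d s
    rw [hHt d s, hH d s]
    congr 2
    set BC := B.map (Int.cast : ℤ → ℂ) with hBC
    set MC := M.map (Int.cast : ℤ → ℂ) with hMC
    have hMd : IsUnit MC.det := by
      have h1 : MC.det = ((M.det : ℤ) : ℂ) := by
        simpa using (RingHom.map_det (Int.castRingHom ℂ) M).symm
      have h2 : (M.map (Int.cast : ℤ → ℚ)).det = ((M.det : ℤ) : ℚ) := by
        simpa using (RingHom.map_det (Int.castRingHom ℚ) M).symm
      rw [h2] at hM
      have : M.det ≠ 0 := by exact_mod_cast hM
      rw [h1]
      simpa using this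
    have hBd : IsUnit BC.det := by
      have h1 : BC.det = ((B.det : ℤ) : ℂ) := by
        simpa using (RingHom.map_det (Int.castRingHom ℂ) B).symm
      have h2 : (B.map (Int.cast : ℤ → ℚ)).det = ((B.det : ℤ) : ℚ) := by
        simpa using (RingHom.map_det (Int.castRingHom ℚ) B).symm
      rw [h2] at hB
      have : B.det ≠ 0 := by exact_mod_cast hB
      rw [h1]
      simpa using this
    have hinv : (BC⁻¹ * MC * BC)⁻¹ = BC⁻¹ * MC⁻¹ * BC := by
      rw [Matrix.mul_inv_rev, Matrix.mul_inv_rev, Matrix.nonsing_inv_nonsing_inv BC hBd]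
      rw [Matrix.mul_assoc]
    rw [hinv]
    set dv : Fin n → ℂ := fun t => ((d : Fin n → ℤ) t : ℂ)
    set sv : Fin n → ℂ := fun t => ((s : Fin n → ℤ) t : ℂ)
    have hvec : (BC⁻¹ * MC⁻¹ * BC) *ᵥ (BC⁻¹ *ᵥ dv) = BC⁻¹ *ᵥ (MC⁻¹ *ᵥ dv) := by
      rw [Matrix.mulVec_mulVec, Matrix.mul_assoc, Matrix.mul_assoc,
        Matrix.mul_nonsing_inv BC hBd, Matrix.mul_one, ← Matrix.mulVec_mulVec]
    rw [hvec]
    have : ∑ i : Fin n, (BC⁻¹ *ᵥ (MC⁻¹ *ᵥ dv)) i * (BC.transpose *ᵥ sv) i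
        = (BC⁻¹ *ᵥ (MC⁻¹ *ᵥ dv)) ⬝ᵥ (BC.transpose *ᵥ sv) := rfl
    rw [this, Matrix.dotProduct_mulVec, Matrix.vecMul_transpose,
      Matrix.mulVec_mulVec, Matrix.mul_nonsing_inv BC hBd, Matrix.one_mulVec]
    rfl
  rw [key]
  exact hUnitary
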